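/- Every assignment-oblivious protocol for the communication game G_n has cost at least log₂(n)/2; in particular there is an edge of E(Π) colliding with at least ⌈log₂ n⌉ other edges of E(Π), so some vertex of the graph E(Π) has degree at least ⌈log₂(n)/2⌉. -/

import Mathlib

/-- The bit written by an assignment-oblivious protocol `B` at location `ℓ` on stream `σ`:
it depends only on `ℓ` and the set of locations arriving before `ℓ`. -/
def writeAO {n : ℕ} (B : Fin n → Finset (Fin n) → Bool) (σ : Equiv.Perm (Fin n))
    (ℓ : Fin n) : Bool :=
  B ℓ (Finset.univ.filter fun m : Fin n => σ.symm m < σ.symm ℓ)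

/-- The hypercube edge `Π_A(σ)` of the assignment-oblivious protocol `B`: the array after
the first `n - 1` arrivals, with the free (`none`) coordinate at the last location. -/
def edgeAO {n : ℕ} (B : Fin n → Finset (Fin n) → Bool) (σ : Equiv.Perm (Fin n)) :
    Fin n → Option Bool :=
  fun ℓ => if (σ.symm ℓ : ℕ) = n - 1 then none else some (writeAO B σ ℓ)

/-- `v ∈ {0,1}^n` is an endpoint of the edge `e` (with `*` encoded as `none`). -/
def Compatible {n : ℕ} (v : Fin n → Bool) (e : Fin n → Option Bool) : Prop :=
  ∀ ℓ b, e ℓ = some b → v ℓ = b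

/-- The degree of `v` in the graph `E(Π)` of the assignment-oblivious protocol `B`. -/
noncomputable def degAO {n : ℕ} (B : Fin n → Finset (Fin n) → Bool)
    (v : Fin n → Bool) : ℕ :=
  {e : Fin n → Option Bool | (∃ σ : Equiv.Perm (Fin n), edgeAO B σ = e) ∧
    Compatible v e}.ncard

namespace AOLB

open Finset

variable {n : ℕ}

/-- the "watcher" function: the bit `x` would write if the arrived set were
everything except the previously-chosen pivots (`S ∪ {x}`) and `u`. -/
def Hf (B : Fin n → Finset (Fin n) → Bool) (x : Fin n) (S : Finset (Fin n)) (u : Fin n) : Bool :=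
  B x ((Finset.univ \ insert x S) \ {u})

/-- new pool after choosing pivot `x`: the larger monochromatic side of `Hf B x L`. -/
def newPool (B : Fin n → Finset (Fin n) → Bool) (L : List (Fin n)) (P : Finset (Fin n))
    (x : Fin n) : Finset (Fin n) :=
  if (P.erase x).card ≤ 2 * ((P.erase x).filter fun u => Hf B x L.toFinset u = true).card
  then (P.erase x).filter fun u => Hf B x L.toFinset u = true
  else P.erase x \ (P.erase x).filter fun u => Hf B x L.toFinset u = true

def stepAO (B : Fin n → Finset (Fin n) → Bool) (s : List (Fin n) × Finset (Fin n)) :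
    List (Fin n) × Finset (Fin n) :=
  if h : s.2.Nonempty then (s.2.min' h :: s.1, newPool B s.1 s.2 (s.2.min' h)) else s

def st (B : Fin n → Finset (Fin n) → Bool) : ℕ → List (Fin n) × Finset (Fin n)
  | 0 => ([], Finset.univ)
  | k + 1 => stepAO B (st B k)

lemma newPool_subset (B : Fin n → Finset (Fin n) → Bool) (L : List (Fin n))
    (P : Finset (Fin n)) (x : Fin n) : newPool B L P x ⊆ P.erase x := by
  unfold newPool
  split
  · exact filter_subset _ _
  · exact sdiff_subset

lemma newPool_card (B : Fin n → Finset (Fin n) → Bool) (L : List (Fin n))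
    (P : Finset (Fin n)) (x : Fin n) (hx : x ∈ P) :
    P.card + 1 ≤ 2 * ((newPool B L P x).card + 1) := by
  have hPe : (P.erase x).card = P.card - 1 := Finset.card_erase_of_mem hx
  have hP1 : 1 ≤ P.card := Finset.card_pos.mpr ⟨x, hx⟩
  have hTsub : (P.erase x).filter (fun u => Hf B x L.toFinset u = true) ⊆ P.erase x :=
    filter_subset _ _
  have hTle := card_le_card hTsub
  have hsd := card_sdiff_of_subset hTsub
  unfold newPool
  split
  · omega
  · omega

lemma newPool_mono (B : Fin n → Finset (Fin n) → Bool) (L : List (Fin n))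
    (P : Finset (Fin n)) (x : Fin n) (u v : Fin n)
    (hu : u ∈ newPool B L P x) (hv : v ∈ newPool B L P x) :
    Hf B x L.toFinset u = Hf B x L.toFinset v := by
  unfold newPool at hu hv
  split at hu <;> split at hv
  · have h1 := (mem_filter.mp hu).2
    have h2 := (mem_filter.mp hv).2
    rw [h1, h2]
  · omega
  · omega
  · have h1 := (mem_sdiff.mp hu).2
    have h2 := (mem_sdiff.mp hv).2
    have h1' : Hf B x L.toFinset u = false := by
      rcases Bool.eq_false_or_eq_true (Hf B x L.toFinset u) with h | h
      · exact absurd (mem_filter.mpr ⟨(mem_sdiff.mp hu).1, h⟩) h1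
      · exact h
    have h2' : Hf B x L.toFinset v = false := by
      rcases Bool.eq_false_or_eq_true (Hf B x L.toFinset v) with h | h
      · exact absurd (mem_filter.mpr ⟨(mem_sdiff.mp hv).1, h⟩) h2
      · exact h
    rw [h1', h2']

structure SI (B : Fin n → Finset (Fin n) → Bool) (k : ℕ) : Prop where
  disj : ∀ x ∈ (st B k).1, x ∉ (st B k).2
  card : n + 1 ≤ 2 ^ k * ((st B k).2.card + 1)
  mono : ∀ L₁ x L', (st B k).1 = L₁ ++ x :: L' → ∀ u v : Fin n,
      (u ∈ (st B k).2 ∨ u ∈ L₁) → (v ∈ (st B k).2 ∨ v ∈ L₁) →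
      Hf B x L'.toFinset u = Hf B x L'.toFinset v

lemma si (B : Fin n → Finset (Fin n) → Bool) :
    ∀ k, 2 ^ (k + 1) ≤ n + 1 → SI B k := by
  intro k
  induction k with
  | zero =>
    intro _
    constructor
    · intro x hx; simp [st] at hx
    · simp [st, Finset.card_univ]
    · intro L₁ x L' habs
      exfalso
      have := congrArg List.length habs
      simp [st] at this
  | succ k ih =>
    intro hk
    have hk' : 2 ^ (k + 1) ≤ n + 1 := le_trans (Nat.pow_le_pow_right (by norm_num) (by omega)) hk
    have I := ih hk'
    have hne : (st B k).2.Nonempty := by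
      rcases Finset.eq_empty_or_nonempty (st B k).2 with h | h
      · exfalso
        have := I.card
        rw [h] at this
        simp at this
        have h2 : 2 ^ k < 2 ^ (k + 1) := Nat.pow_lt_pow_right (by norm_num) (by omega)
        omega
      · exact h
    have hst : st B (k + 1) =
        ((st B k).2.min' hne :: (st B k).1, newPool B (st B k).1 (st B k).2 ((st B k).2.min' hne)) := by
      show stepAO B (st B k) = _
      rw [stepAO, dif_pos hne]
    have hminmem := (st B k).2.min'_mem hne
    constructor
    · intro x hx
      rw [hst] at hx ⊢
      simp only [List.mem_cons] at hx
      intro hmem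
      have hmem' : x ∈ (st B k).2.erase ((st B k).2.min' hne) := newPool_subset _ _ _ _ hmem
      rcases hx with h | h
      · rw [h] at hmem'
        exact (Finset.notMem_erase _ _) hmem'
      · exact I.disj x h (Finset.mem_of_mem_erase hmem')
    · rw [hst]
      have h1 := newPool_card B (st B k).1 (st B k).2 ((st B k).2.min' hne) hminmem
      have h2 := I.card
      calc n + 1 ≤ 2 ^ k * ((st B k).2.card + 1) := h2
        _ ≤ 2 ^ k * (2 * ((newPool B (st B k).1 (st B k).2 ((st B k).2.min' hne)).card + 1)) :=
            Nat.mul_le_mul_left _ h1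
        _ = 2 ^ (k + 1) * ((newPool B (st B k).1 (st B k).2 ((st B k).2.min' hne)).card + 1) := by
            ring
    · intro L₁ x L' hdec u v hu hv
      rw [hst] at hdec hu hv
      simp only at hdec hu hv
      match L₁, hdec with
      | [], hdec =>
        have hx : x = (st B k).2.min' hne := by
          have := congrArg (fun l => l.headD x) hdec
          simpa using this.symm
        have hL' : L' = (st B k).1 := by
          have := congrArg List.tail hdec
          simpa using this.symm
        subst hx; subst hL'
        rcases hu with hu | hu
        · rcases hv with hv | hv
          · exact newPool_mono B _ _ _ u v hu hv
          · exact absurd hv (by simp)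
        · exact absurd hu (by simp)
      | a :: L₁', hdec =>
        simp only [List.cons_append, List.cons.injEq] at hdec
        obtain ⟨ha, hdec'⟩ := hdec
        have key : ∀ w : Fin n,
            (w ∈ newPool B (st B k).1 (st B k).2 ((st B k).2.min' hne) ∨ w ∈ a :: L₁') →
            (w ∈ (st B k).2 ∨ w ∈ L₁') := by
          intro w hw
          rcases hw with hw | hw
          · exact Or.inl (Finset.mem_of_mem_erase (newPool_subset _ _ _ _ hw))
          · rcases List.mem_cons.mp hw with hw | hw
            · exact Or.inl (by rw [hw, ← ha]; exact hminmem)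
            · exact Or.inr hw
        exact I.mono L₁' x L' hdec' u v (key u hu) (key v hv)

/-- number of pivot steps -/
def mA (n : ℕ) : ℕ := Nat.log 2 (n + 1) - 1

lemma log_pos (hn : 1 ≤ n) : 1 ≤ Nat.log 2 (n + 1) := by
  have h := Nat.log_eq_zero_iff (b := 2) (n := n + 1)
  rcases Nat.eq_zero_or_pos (Nat.log 2 (n + 1)) with h0 | h1
  · exfalso
    have := h.mp h0
    omega
  · exact h1

lemma mA_succ (hn : 1 ≤ n) : mA n + 1 = Nat.log 2 (n + 1) := by
  have := log_pos hn
  unfold mA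
  omega

lemma pow_mA (hn : 1 ≤ n) : 2 ^ (mA n + 1) ≤ n + 1 := by
  rw [mA_succ hn]
  exact Nat.pow_log_le_self 2 (by omega)

lemma mA_le (hn : 1 ≤ n) : mA n + 1 ≤ n := by
  have h1 := pow_mA hn
  have h2 : n < 2 ^ n := Nat.lt_two_pow_self
  by_contra h
  have : 2 ^ (n + 1) ≤ 2 ^ (mA n + 1) := Nat.pow_le_pow_right (by norm_num) (by omega)
  have : 2 ^ n < 2 ^ (n+1) := Nat.pow_lt_pow_right (by norm_num) (by omega)
  omega

lemma si' (B : Fin n → Finset (Fin n) → Bool) (hn : 1 ≤ n) (k : ℕ) (hk : k ≤ mA n) :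
    SI B k := by
  apply si
  calc 2 ^ (k + 1) ≤ 2 ^ (mA n + 1) := Nat.pow_le_pow_right (by norm_num) (by omega)
    _ ≤ n + 1 := pow_mA hn

lemma pool_ne (B : Fin n → Finset (Fin n) → Bool) (hn : 1 ≤ n) (k : ℕ) (hk : k ≤ mA n) :
    (st B k).2.Nonempty := by
  have I := si' B hn k hk
  rcases Finset.eq_empty_or_nonempty (st B k).2 with h | h
  · exfalso
    have hc := I.card
    rw [h] at hc
    simp at hc
    have h1 : 2 ^ (k+1) ≤ 2 ^ (mA n + 1) := Nat.pow_le_pow_right (by norm_num) (by omega)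
    have h2 := pow_mA hn
    have h3 : 2 ^ k < 2 ^ (k + 1) := Nat.pow_lt_pow_right (by norm_num) (by omega)
    omega
  · exact h

/-- the slack location, chosen from the final pool -/
def r0 (B : Fin n → Finset (Fin n) → Bool) (hn : 1 ≤ n) : Fin n :=
  if h : (st B (mA n)).2.Nonempty then (st B (mA n)).2.min' h else ⟨0, hn⟩

lemma r0_pool (B : Fin n → Finset (Fin n) → Bool) (hn : 1 ≤ n) :
    r0 B hn ∈ (st B (mA n)).2 := by
  have h := pool_ne B hn (mA n) le_rfl
  rw [r0, dif_pos h]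
  exact Finset.min'_mem _ _

/-- the pivot locations: `rr B hn j` is the pivot chosen at step `j` (for `1 ≤ j ≤ mA n`);
`rr B hn 0` is the slack location. -/
def rr (B : Fin n → Finset (Fin n) → Bool) (hn : 1 ≤ n) (j : ℕ) : Fin n :=
  if j = 0 then r0 B hn else ((st B j).1).headD (r0 B hn)

lemma rr_zero (B : Fin n → Finset (Fin n) → Bool) (hn : 1 ≤ n) : rr B hn 0 = r0 B hn := rfl

lemma st_cons (B : Fin n → Finset (Fin n) → Bool) (hn : 1 ≤ n) (k : ℕ) (hk : k + 1 ≤ mA n) :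
    (st B (k + 1)).1 = rr B hn (k + 1) :: (st B k).1 ∧ rr B hn (k + 1) ∈ (st B k).2 := by
  have hne : (st B k).2.Nonempty := pool_ne B hn k (by omega)
  have hst : st B (k + 1) =
      ((st B k).2.min' hne :: (st B k).1, newPool B (st B k).1 (st B k).2 ((st B k).2.min' hne)) := by
    show stepAO B (st B k) = _
    rw [stepAO, dif_pos hne]
  have hr : rr B hn (k + 1) = (st B k).2.min' hne := by
    rw [rr, if_neg (by omega), hst]
    rfl
  constructor
  · rw [hst, hr]
  · rw [hr]; exact Finset.min'_mem _ _

lemma list_decomp (B : Fin n → Finset (Fin n) → Bool) (hn : 1 ≤ n) :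
    ∀ i j, i ≤ j → j ≤ mA n → ∃ L₁ : List (Fin n), (st B j).1 = L₁ ++ (st B i).1 := by
  intro i j hij hj
  induction j with
  | zero =>
    have : i = 0 := by omega
    subst this
    exact ⟨[], rfl⟩
  | succ j ihj =>
    rcases Nat.eq_or_lt_of_le hij with h | h
    · subst h; exact ⟨[], rfl⟩
    · obtain ⟨L₁, hL₁⟩ := ihj (by omega) (by omega)
      have hc := (st_cons B hn j (by omega)).1
      exact ⟨rr B hn (j + 1) :: L₁, by rw [hc, hL₁]; rfl⟩

lemma rr_mem_list (B : Fin n → Finset (Fin n) → Bool) (hn : 1 ≤ n) (j k : ℕ)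
    (hj1 : 1 ≤ j) (hjk : j ≤ k) (hk : k ≤ mA n) : rr B hn j ∈ (st B k).1 := by
  obtain ⟨L₁, hL₁⟩ := list_decomp B hn j k hjk hk
  have hc := (st_cons B hn (j - 1) (by omega)).1
  have hj : j - 1 + 1 = j := by omega
  rw [hj] at hc
  rw [hL₁, hc]
  simp

lemma rr_pool (B : Fin n → Finset (Fin n) → Bool) (hn : 1 ≤ n) (j : ℕ)
    (hj1 : 1 ≤ j) (hj : j ≤ mA n) : rr B hn j ∈ (st B (j - 1)).2 := by
  have hc := (st_cons B hn (j - 1) (by omega)).2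
  have hjj : j - 1 + 1 = j := by omega
  rw [hjj] at hc
  exact hc

lemma rr_inj (B : Fin n → Finset (Fin n) → Bool) (hn : 1 ≤ n) (i j : ℕ)
    (hi : i ≤ mA n) (hj : j ≤ mA n) (hij : i ≠ j) : rr B hn i ≠ rr B hn j := by
  -- wlog i < j via cases
  have main : ∀ a b : ℕ, a ≤ mA n → b ≤ mA n → a < b → rr B hn a ≠ rr B hn b := by
    intro a b ha hb hab
    have hbpool : rr B hn b ∈ (st B (b - 1)).2 := rr_pool B hn b (by omega) hb
    have hI := si' B hn (b - 1) (by omega)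
    rcases Nat.eq_zero_or_pos a with h0 | h1
    · subst h0
      -- rr 0 = r0 ∈ final pool; rr b ∈ list at stage b ... use disj at stage mA n
      have hbl : rr B hn b ∈ (st B (mA n)).1 := rr_mem_list B hn b (mA n) (by omega) hb le_rfl
      have hd := (si' B hn (mA n) le_rfl).disj _ hbl
      rw [rr_zero]
      intro h
      rw [← h] at hd
      exact hd (r0_pool B hn)
    · have hal : rr B hn a ∈ (st B (b - 1)).1 := rr_mem_list B hn a (b - 1) h1 (by omega) (by omega)
      have hd := hI.disj _ hal
      intro h
      rw [h] at hd
      exact hd hbpool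
  rcases Nat.lt_or_ge i j with h | h
  · exact main i j hi hj h
  · have : j < i := by omega
    exact (main j i hj hi this).symm

/-- `{r 0, r 1, ..., r w}` -/
def Rf (B : Fin n → Finset (Fin n) → Bool) (hn : 1 ≤ n) (w : ℕ) : Finset (Fin n) :=
  (Finset.range (w + 1)).image (rr B hn)

/-- `{r 1, ..., r w}` -/
def R1 (B : Fin n → Finset (Fin n) → Bool) (hn : 1 ≤ n) (w : ℕ) : Finset (Fin n) :=
  (Finset.Icc 1 w).image (rr B hn)

lemma Rf_eq_insert (B : Fin n → Finset (Fin n) → Bool) (hn : 1 ≤ n) (w : ℕ) :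
    Rf B hn w = insert (rr B hn 0) (R1 B hn w) := by
  ext x
  simp only [Rf, R1, mem_image, mem_insert, mem_range, mem_Icc]
  constructor
  · rintro ⟨j, hj, rfl⟩
    rcases Nat.eq_zero_or_pos j with h0 | h1
    · subst h0; exact Or.inl rfl
    · exact Or.inr ⟨j, ⟨h1, by omega⟩, rfl⟩
  · rintro (h | ⟨j, hj, rfl⟩)
    · exact ⟨0, by omega, h.symm⟩
    · exact ⟨j, by omega, rfl⟩

lemma R1_succ (B : Fin n → Finset (Fin n) → Bool) (hn : 1 ≤ n) (w : ℕ) (hw : 1 ≤ w) :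
    R1 B hn w = insert (rr B hn w) (R1 B hn (w - 1)) := by
  ext x
  simp only [R1, mem_image, mem_insert, mem_Icc]
  constructor
  · rintro ⟨j, hj, rfl⟩
    rcases Nat.eq_or_lt_of_le hj.2 with h | h
    · exact Or.inl (by rw [h])
    · exact Or.inr ⟨j, ⟨hj.1, by omega⟩, rfl⟩
  · rintro (h | ⟨j, hj, rfl⟩)
    · exact ⟨w, by omega, h.symm⟩
    · exact ⟨j, by omega, rfl⟩

lemma toFinset_list (B : Fin n → Finset (Fin n) → Bool) (hn : 1 ≤ n) (k : ℕ) (hk : k ≤ mA n) :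
    ((st B k).1).toFinset = R1 B hn k := by
  induction k with
  | zero =>
    show (([] : List (Fin n)).toFinset) = _
    ext x
    simp [R1, st]
  | succ k ih =>
    have hc := (st_cons B hn k hk).1
    rw [hc]
    simp only [List.toFinset_cons]
    rw [ih (by omega), R1_succ B hn (k+1) (by omega)]
    norm_num

lemma mono_final (B : Fin n → Finset (Fin n) → Bool) (hn : 1 ≤ n) (w k : ℕ)
    (hw1 : 1 ≤ w) (hwk : w < k) (hk : k ≤ mA n) :
    Hf B (rr B hn w) (R1 B hn (w - 1)) (rr B hn k) =
      Hf B (rr B hn w) (R1 B hn (w - 1)) (rr B hn 0) := by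
  obtain ⟨L₁, hL₁⟩ := list_decomp B hn w (mA n) (by omega) le_rfl
  have hc := (st_cons B hn (w - 1) (by omega)).1
  have hww : w - 1 + 1 = w := by omega
  rw [hww] at hc
  have hdec : (st B (mA n)).1 = L₁ ++ rr B hn w :: (st B (w-1)).1 := by rw [hL₁, hc]
  have hkL : rr B hn k ∈ L₁ := by
    have hml : rr B hn k ∈ (st B (mA n)).1 := rr_mem_list B hn k (mA n) (by omega) hk le_rfl
    rw [hL₁] at hml
    rcases List.mem_append.mp hml with h | h
    · exact h
    · exfalso
      -- rr k would be in the list at stage w, i.e. equal to some rr j with j ≤ w < k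
      rw [← List.mem_toFinset, toFinset_list B hn w (by omega)] at h
      simp only [R1, mem_image, mem_Icc] at h
      obtain ⟨j, hj, hjk⟩ := h
      exact rr_inj B hn j k (by omega) hk (by omega) hjk
  have hmono := (si' B hn (mA n) le_rfl).mono L₁ (rr B hn w) ((st B (w-1)).1) hdec
    (rr B hn k) (rr B hn 0) (Or.inr hkL) (Or.inl (by rw [rr_zero]; exact r0_pool B hn))
  rw [toFinset_list B hn (w-1) (by omega)] at hmono
  exact hmono

/-- position `k` from the end: `n - 1 - k`. -/
def posA (hn : 1 ≤ n) (k : ℕ) : Fin n := ⟨n - 1 - k, by omega⟩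

lemma posA_inj (hn : 1 ≤ n) (i j : ℕ) (hi : i ≤ n - 1) (hj : j ≤ n - 1)
    (h : posA hn i = posA hn j) : i = j := by
  have := congrArg (fun x : Fin n => (x : ℕ)) h
  simp only [posA] at this
  omega

/-- permutation placing pivot `rr j` at position `n - 1 - j`, built by swaps. -/
def tauA (B : Fin n → Finset (Fin n) → Bool) (hn : 1 ≤ n) : ℕ → Equiv.Perm (Fin n)
  | 0 => 1
  | k + 1 => tauA B hn k * Equiv.swap ((tauA B hn k).symm (rr B hn k)) (posA hn k)

def tauF (B : Fin n → Finset (Fin n) → Bool) (hn : 1 ≤ n) : Equiv.Perm (Fin n) :=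
  tauA B hn (mA n + 1)

lemma tauA_pos (B : Fin n → Finset (Fin n) → Bool) (hn : 1 ≤ n) :
    ∀ j, j ≤ mA n + 1 → ∀ i, i < j → tauA B hn j (posA hn i) = rr B hn i := by
  intro j
  induction j with
  | zero => intro _ i hi; omega
  | succ j ihj =>
    intro hj i hi
    have hmn := mA_le hn
    show (tauA B hn j * Equiv.swap ((tauA B hn j).symm (rr B hn j)) (posA hn j)) _ = _
    rcases Nat.eq_or_lt_of_le (Nat.lt_succ_iff.mp hi) with h | h
    · subst h
      rw [Equiv.Perm.mul_apply, Equiv.swap_apply_right, Equiv.apply_symm_apply]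
    · have h1 : posA hn i ≠ posA hn j := by
        intro hc
        have := posA_inj hn i j (by omega) (by omega) hc
        omega
      have h2 : posA hn i ≠ (tauA B hn j).symm (rr B hn j) := by
        intro hc
        have : tauA B hn j (posA hn i) = rr B hn j := by
          rw [hc, Equiv.apply_symm_apply]
        rw [ihj (by omega) i h] at this
        exact rr_inj B hn i j (by omega) (by omega) (by omega) this
      rw [Equiv.Perm.mul_apply, Equiv.swap_apply_of_ne_of_ne h2 h1]
      exact ihj (by omega) i h

lemma tau_pos (B : Fin n → Finset (Fin n) → Bool) (hn : 1 ≤ n) (i : ℕ) (hi : i ≤ mA n) :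
    tauF B hn (posA hn i) = rr B hn i :=
  tauA_pos B hn (mA n + 1) le_rfl i (by omega)

lemma tau_symm (B : Fin n → Finset (Fin n) → Bool) (hn : 1 ≤ n) (i : ℕ) (hi : i ≤ mA n) :
    (tauF B hn).symm (rr B hn i) = posA hn i := by
  rw [← tau_pos B hn i hi, Equiv.symm_apply_apply]

/-- KEY: position of `x` is `< n - 1 - w` iff `x` is not one of the pivots `r 0, ..., r w`. -/
lemma key_pos (B : Fin n → Finset (Fin n) → Bool) (hn : 1 ≤ n) (x : Fin n) (w : ℕ)
    (hw : w ≤ mA n) : (((tauF B hn).symm x : ℕ) < n - 1 - w) ↔ x ∉ Rf B hn w := by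
  have hmn := mA_le hn
  constructor
  · intro h hx
    simp only [Rf, mem_image, mem_range] at hx
    obtain ⟨j, hj, hjx⟩ := hx
    rw [← hjx, tau_symm B hn j (by omega)] at h
    simp only [posA] at h
    omega
  · intro hx
    by_contra h
    apply hx
    set p := (tauF B hn).symm x with hp
    have hpn : (p : ℕ) < n := p.isLt
    have hge : n - 1 - w ≤ (p : ℕ) := by omega
    have hj : posA hn (n - 1 - (p : ℕ)) = p := by
      simp only [posA]
      apply Fin.ext
      simp
      omega
    have hjw : n - 1 - (p : ℕ) ≤ w := by omega
    have : x = rr B hn (n - 1 - (p : ℕ)) := by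
      rw [← tau_pos B hn (n - 1 - (p : ℕ)) (by omega), hj, hp, Equiv.apply_symm_apply]
    simp only [Rf, mem_image, mem_range]
    exact ⟨n - 1 - (p : ℕ), by omega, this.symm⟩

/-- the direction permutations: swap positions of `r k` and the slack `r 0`. -/
def tks (B : Fin n → Finset (Fin n) → Bool) (hn : 1 ≤ n) (k : ℕ) : Equiv.Perm (Fin n) :=
  tauF B hn * Equiv.swap (posA hn k) (posA hn 0)

lemma tks_symm (B : Fin n → Finset (Fin n) → Bool) (hn : 1 ≤ n) (k : ℕ) (x : Fin n) :
    (tks B hn k).symm x = Equiv.swap (posA hn k) (posA hn 0) ((tauF B hn).symm x) := by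
  rw [tks, Equiv.Perm.mul_def, Equiv.symm_trans_apply, Equiv.symm_swap]

lemma tks_symm_r0 (B : Fin n → Finset (Fin n) → Bool) (hn : 1 ≤ n) (k : ℕ) (hk : k ≤ mA n) :
    (tks B hn k).symm (rr B hn 0) = posA hn k := by
  rw [tks_symm, tau_symm B hn 0 (by omega), Equiv.swap_apply_right]

lemma tks_symm_rk (B : Fin n → Finset (Fin n) → Bool) (hn : 1 ≤ n) (k : ℕ) (hk : k ≤ mA n) :
    (tks B hn k).symm (rr B hn k) = posA hn 0 := by
  rw [tks_symm, tau_symm B hn k hk, Equiv.swap_apply_left]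

lemma tks_symm_other (B : Fin n → Finset (Fin n) → Bool) (hn : 1 ≤ n) (k : ℕ) (hk : k ≤ mA n)
    (x : Fin n) (h0 : x ≠ rr B hn 0) (hkx : x ≠ rr B hn k) :
    (tks B hn k).symm x = (tauF B hn).symm x := by
  rw [tks_symm]
  apply Equiv.swap_apply_of_ne_of_ne
  · intro hc
    apply hkx
    have := congrArg (tauF B hn) hc
    rw [Equiv.apply_symm_apply, tau_pos B hn k hk] at this
    exact this
  · intro hc
    apply h0
    have := congrArg (tauF B hn) hc
    rw [Equiv.apply_symm_apply, tau_pos B hn 0 (by omega)] at this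
    exact this

lemma val_r0 (B : Fin n → Finset (Fin n) → Bool) (hn : 1 ≤ n) :
    (((tauF B hn).symm (rr B hn 0) : ℕ)) = n - 1 := by
  rw [tau_symm B hn 0 (by omega)]
  simp [posA]

lemma val_rj (B : Fin n → Finset (Fin n) → Bool) (hn : 1 ≤ n) (j : ℕ) (hj : j ≤ mA n) :
    (((tauF B hn).symm (rr B hn j) : ℕ)) = n - 1 - j := by
  rw [tau_symm B hn j hj]
  simp [posA]

/-- generic coordinates: locations strictly before position `n-1-k` have the same
prefix set under `tks k` as under the reference. -/
lemma write_generic (B : Fin n → Finset (Fin n) → Bool) (hn : 1 ≤ n) (k : ℕ)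
    (hk1 : 1 ≤ k) (hk : k ≤ mA n) (ℓ : Fin n)
    (hpos : (((tauF B hn).symm ℓ : ℕ)) < n - 1 - k) :
    writeAO B (tks B hn k) ℓ = writeAO B (tauF B hn) ℓ := by
  have hmn := mA_le hn
  have h0 : ℓ ≠ rr B hn 0 := by
    intro h; rw [h, val_r0 B hn] at hpos; omega
  have hkx : ℓ ≠ rr B hn k := by
    intro h; rw [h, val_rj B hn k hk] at hpos; omega
  have hsymm : (tks B hn k).symm ℓ = (tauF B hn).symm ℓ := tks_symm_other B hn k hk ℓ h0 hkx
  unfold writeAO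
  congr 1
  ext x
  simp only [mem_filter, mem_univ, true_and, hsymm]
  by_cases hx0 : x = rr B hn 0
  · subst hx0
    rw [tks_symm_r0 B hn k hk]
    simp only [Fin.lt_def, val_r0 B hn]
    constructor
    · intro h; exfalso; simp [posA] at h; omega
    · intro h; exfalso; omega
  · by_cases hxk : x = rr B hn k
    · subst hxk
      rw [tks_symm_rk B hn k hk]
      simp only [Fin.lt_def, val_rj B hn k hk]
      constructor
      · intro h; exfalso; simp [posA] at h; omega
      · intro h; exfalso; omega
    · rw [tks_symm_other B hn k hk x hx0 hxk]

/-- the slack coordinate of edge `k`: prefix set is everything except `r 0, ..., r k`. -/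
lemma write_slack (B : Fin n → Finset (Fin n) → Bool) (hn : 1 ≤ n) (k : ℕ)
    (hk1 : 1 ≤ k) (hk : k ≤ mA n) :
    writeAO B (tks B hn k) (rr B hn 0) = B (rr B hn 0) (Finset.univ \ Rf B hn k) := by
  have hmn := mA_le hn
  unfold writeAO
  congr 1
  ext x
  simp only [mem_filter, mem_univ, true_and, mem_sdiff, tks_symm_r0 B hn k hk]
  by_cases hx0 : x = rr B hn 0
  · subst hx0
    rw [tks_symm_r0 B hn k hk]
    constructor
    · intro h; exact absurd h (lt_irrefl _)
    · intro h
      exfalso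
      apply h
      simp only [Rf, mem_image, mem_range]
      exact ⟨0, by omega, rfl⟩
  · by_cases hxk : x = rr B hn k
    · subst hxk
      rw [tks_symm_rk B hn k hk]
      constructor
      · intro h
        exfalso
        have h' : (posA hn 0 : ℕ) < (posA hn k : ℕ) := h
        simp only [posA] at h'
        omega
      · intro h
        exfalso
        apply h
        simp only [Rf, mem_image, mem_range]
        exact ⟨k, by omega, rfl⟩
    · rw [tks_symm_other B hn k hk x hx0 hxk]
      have : ((tauF B hn).symm x < posA hn k) ↔ (((tauF B hn).symm x : ℕ) < n - 1 - k) :=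
        Iff.rfl
      rw [this, key_pos B hn x k hk]

/-- the reference bit at a pivot coordinate. -/
lemma write_ref_pivot (B : Fin n → Finset (Fin n) → Bool) (hn : 1 ≤ n) (w : ℕ)
    (hw1 : 1 ≤ w) (hw : w ≤ mA n) :
    writeAO B (tauF B hn) (rr B hn w) = B (rr B hn w) (Finset.univ \ Rf B hn w) := by
  unfold writeAO
  congr 1
  ext x
  simp only [mem_filter, mem_univ, true_and, mem_sdiff]
  rw [tau_symm B hn w hw]
  have : ((tauF B hn).symm x < posA hn w) ↔ (((tauF B hn).symm x : ℕ) < n - 1 - w) :=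
    Iff.rfl
  rw [this, key_pos B hn x w hw]

/-- the `tks k` bit at a watcher coordinate `r w`, `w < k`. -/
lemma write_k_pivot (B : Fin n → Finset (Fin n) → Bool) (hn : 1 ≤ n) (w k : ℕ)
    (hw1 : 1 ≤ w) (hwk : w < k) (hk : k ≤ mA n) :
    writeAO B (tks B hn k) (rr B hn w) =
      B (rr B hn w) ((Finset.univ \ R1 B hn w) \ {rr B hn k}) := by
  have hmn := mA_le hn
  have hw : w ≤ mA n := by omega
  have hwne0 : rr B hn w ≠ rr B hn 0 := rr_inj B hn w 0 hw (by omega) (by omega)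
  have hwnek : rr B hn w ≠ rr B hn k := rr_inj B hn w k hw hk (by omega)
  unfold writeAO
  congr 1
  ext x
  simp only [mem_filter, mem_univ, true_and, mem_sdiff, mem_singleton]
  rw [tks_symm_other B hn k hk (rr B hn w) hwne0 hwnek, tau_symm B hn w hw]
  by_cases hx0 : x = rr B hn 0
  · subst hx0
    rw [tks_symm_r0 B hn k hk]
    constructor
    · intro _
      constructor
      · intro hc
        simp only [R1, mem_image, mem_Icc] at hc
        obtain ⟨j, hj, hjx⟩ := hc
        exact rr_inj B hn j 0 (by omega) (by omega) (by omega) hjx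
      · intro hc
        exact rr_inj B hn 0 k (by omega) hk (by omega) hc
    · intro _
      show (posA hn k : ℕ) < (posA hn w : ℕ)
      simp only [posA]
      omega
  · by_cases hxk : x = rr B hn k
    · subst hxk
      rw [tks_symm_rk B hn k hk]
      constructor
      · intro h
        exfalso
        have h' : (posA hn 0 : ℕ) < (posA hn w : ℕ) := h
        simp only [posA] at h'
        omega
      · intro h
        exact absurd rfl h.2
    · rw [tks_symm_other B hn k hk x hx0 hxk]
      have : ((tauF B hn).symm x < posA hn w) ↔ (((tauF B hn).symm x : ℕ) < n - 1 - w) :=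
        Iff.rfl
      rw [this, key_pos B hn x w hw, Rf_eq_insert B hn w]
      simp only [mem_insert, not_or]
      constructor
      · rintro ⟨a, b⟩
        exact ⟨b, hxk⟩
      · rintro ⟨a, b⟩
        exact ⟨hx0, a⟩

lemma sdiff_insert_eq (a : Fin n) (t : Finset (Fin n)) :
    (Finset.univ \ insert a t : Finset (Fin n)) = (Finset.univ \ t) \ {a} := by
  ext x
  simp only [mem_sdiff, mem_insert, mem_univ, true_and, mem_singleton, not_or]
  tauto

lemma Hf_eq (B : Fin n → Finset (Fin n) → Bool) (hn : 1 ≤ n) (w : ℕ) (hw1 : 1 ≤ w)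
    (hw : w ≤ mA n) (u : Fin n) :
    Hf B (rr B hn w) (R1 B hn (w - 1)) u = B (rr B hn w) ((Finset.univ \ R1 B hn w) \ {u}) := by
  unfold Hf
  congr 2
  rw [← R1_succ B hn w hw1]

lemma watcher_eq (B : Fin n → Finset (Fin n) → Bool) (hn : 1 ≤ n) (w k : ℕ)
    (hw1 : 1 ≤ w) (hwk : w < k) (hk : k ≤ mA n) :
    writeAO B (tks B hn k) (rr B hn w) = writeAO B (tauF B hn) (rr B hn w) := by
  rw [write_k_pivot B hn w k hw1 hwk hk, write_ref_pivot B hn w hw1 (by omega)]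
  rw [← Hf_eq B hn w hw1 (by omega) (rr B hn k)]
  rw [mono_final B hn w k hw1 hwk hk]
  rw [Hf_eq B hn w hw1 (by omega) (rr B hn 0)]
  congr 1
  rw [Rf_eq_insert B hn w, sdiff_insert_eq]

/-- the bit recorded at the slack coordinate by direction edge `k`. -/
def bb (B : Fin n → Finset (Fin n) → Bool) (hn : 1 ≤ n) (k : ℕ) : Bool :=
  B (rr B hn 0) (Finset.univ \ Rf B hn k)

/-- majority value of the slack bits. -/
def mu (B : Fin n → Finset (Fin n) → Bool) (hn : 1 ≤ n) : Bool :=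
  if mA n ≤ 2 * (((Finset.Icc 1 (mA n))).filter fun k => bb B hn k = true).card
  then true else false

/-- the kept (majority) directions. -/
def KK (B : Fin n → Finset (Fin n) → Bool) (hn : 1 ≤ n) : Finset ℕ :=
  (Finset.Icc 1 (mA n)).filter fun k => bb B hn k = mu B hn

lemma KK_card (B : Fin n → Finset (Fin n) → Bool) (hn : 1 ≤ n) :
    mA n ≤ 2 * (KK B hn).card := by
  classical
  have hpart := Finset.card_filter_add_card_filter_not
    (s := Finset.Icc 1 (mA n)) (p := fun k => bb B hn k = true)
  have hIcc : (Finset.Icc 1 (mA n)).card = mA n := by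
    rw [Nat.card_Icc]
    omega
  by_cases hc : mA n ≤ 2 * (((Finset.Icc 1 (mA n))).filter fun k => bb B hn k = true).card
  · have hmu : mu B hn = true := if_pos hc
    have : KK B hn = (Finset.Icc 1 (mA n)).filter fun k => bb B hn k = true := by
      unfold KK
      rw [hmu]
    rw [this]
    exact hc
  · have hmu : mu B hn = false := if_neg hc
    have hKKeq : KK B hn = (Finset.Icc 1 (mA n)).filter fun k => ¬ (bb B hn k = true) := by
      unfold KK
      rw [hmu]
      apply Finset.filter_congr
      intro k _
      simp [Bool.not_eq_true]
    rw [hKKeq]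
    omega

/-- the good vertex. -/
def vv (B : Fin n → Finset (Fin n) → Bool) (hn : 1 ≤ n) : Fin n → Bool :=
  fun ℓ => if ℓ = rr B hn 0 then mu B hn else writeAO B (tauF B hn) ℓ

lemma ref_none (B : Fin n → Finset (Fin n) → Bool) (hn : 1 ≤ n) (ℓ : Fin n) :
    edgeAO B (tauF B hn) ℓ = none ↔ ℓ = rr B hn 0 := by
  unfold edgeAO
  constructor
  · intro h
    by_cases hc : (((tauF B hn).symm ℓ : ℕ)) = n - 1
    · have hval : (tauF B hn).symm ℓ = posA hn 0 := by
        apply Fin.ext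
        simpa [posA] using hc
      have := congrArg (tauF B hn) hval
      rw [Equiv.apply_symm_apply, tau_pos B hn 0 (by omega)] at this
      exact this
    · rw [if_neg hc] at h
      exact absurd h (by simp)
  · intro h
    subst h
    rw [if_pos (val_r0 B hn)]

lemma tks_none (B : Fin n → Finset (Fin n) → Bool) (hn : 1 ≤ n) (k : ℕ)
    (hk1 : 1 ≤ k) (hk : k ≤ mA n) (ℓ : Fin n) :
    edgeAO B (tks B hn k) ℓ = none ↔ ℓ = rr B hn k := by
  unfold edgeAO
  constructor
  · intro h
    by_cases hc : (((tks B hn k).symm ℓ : ℕ)) = n - 1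
    · have hval : (tks B hn k).symm ℓ = posA hn 0 := by
        apply Fin.ext
        simpa [posA] using hc
      have := congrArg (tks B hn k) hval
      rw [Equiv.apply_symm_apply] at this
      rw [this]
      show tks B hn k (posA hn 0) = _
      rw [tks, Equiv.Perm.mul_apply, Equiv.swap_apply_right, tau_pos B hn k hk]
    · rw [if_neg hc] at h
      exact absurd h (by simp)
  · intro h
    subst h
    rw [if_pos]
    rw [tks_symm_rk B hn k hk]
    simp [posA]

lemma compat_ref (B : Fin n → Finset (Fin n) → Bool) (hn : 1 ≤ n) :
    Compatible (vv B hn) (edgeAO B (tauF B hn)) := by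
  intro ℓ b h
  have hnone : ¬ edgeAO B (tauF B hn) ℓ = none := by
    rw [h]; simp
  have hne : ℓ ≠ rr B hn 0 := fun hc => hnone ((ref_none B hn ℓ).mpr hc)
  unfold edgeAO at h
  by_cases hc : (((tauF B hn).symm ℓ : ℕ)) = n - 1
  · rw [if_pos hc] at h
    exact absurd h (by simp)
  · rw [if_neg hc] at h
    have : writeAO B (tauF B hn) ℓ = b := by
      injection h
    rw [← this, vv, if_neg hne]

lemma compat_k (B : Fin n → Finset (Fin n) → Bool) (hn : 1 ≤ n) (k : ℕ)
    (hk1 : 1 ≤ k) (hk : k ≤ mA n) (hbk : bb B hn k = mu B hn) :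
    Compatible (vv B hn) (edgeAO B (tks B hn k)) := by
  intro ℓ b h
  have hmn := mA_le hn
  have hnone : ¬ edgeAO B (tks B hn k) ℓ = none := by
    rw [h]; simp
  have hnek : ℓ ≠ rr B hn k := fun hc => hnone ((tks_none B hn k hk1 hk ℓ).mpr hc)
  unfold edgeAO at h
  by_cases hc : (((tks B hn k).symm ℓ : ℕ)) = n - 1
  · rw [if_pos hc] at h
    exact absurd h (by simp)
  · rw [if_neg hc] at h
    have hb : writeAO B (tks B hn k) ℓ = b := by injection h
    by_cases hl0 : ℓ = rr B hn 0
    · subst hl0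
      rw [write_slack B hn k hk1 hk] at hb
      rw [vv, if_pos rfl, ← hbk, bb]
      exact hb
    · rw [vv, if_neg hl0]
      rw [← hb]
      symm
      by_cases hRf : ℓ ∈ Rf B hn (mA n)
      · simp only [Rf, mem_image, mem_range] at hRf
        obtain ⟨j, hjm, hjl⟩ := hRf
        have hj0 : j ≠ 0 := by
          intro hc'; subst hc'; exact hl0 hjl.symm
        have hjk : j ≠ k := by
          intro hc'; subst hc'; exact hnek hjl.symm
        rcases Nat.lt_or_ge j k with hlt | hge
        · rw [← hjl]
          exact watcher_eq B hn j k (by omega) hlt hk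
        · have hjgt : k < j := by omega
          apply write_generic B hn k hk1 hk ℓ
          rw [← hjl, val_rj B hn j (by omega)]
          omega
      · apply write_generic B hn k hk1 hk ℓ
        have := (key_pos B hn ℓ (mA n) le_rfl).mpr hRf
        omega

lemma deg_lb (B : Fin n → Finset (Fin n) → Bool) (hn : 1 ≤ n) :
    (KK B hn).card + 1 ≤ degAO B (vv B hn) := by
  classical
  set FF : Finset (Fin n → Option Bool) :=
    insert (edgeAO B (tauF B hn)) ((KK B hn).image fun k => edgeAO B (tks B hn k)) with hFF
  have hsub : (↑FF : Set (Fin n → Option Bool)) ⊆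
      {e : Fin n → Option Bool | (∃ σ : Equiv.Perm (Fin n), edgeAO B σ = e) ∧
        Compatible (vv B hn) e} := by
    intro e he
    simp only [hFF, Finset.coe_insert, Set.mem_insert_iff, Finset.coe_image,
      Set.mem_image, Finset.mem_coe] at he
    rcases he with rfl | ⟨k, hkK, rfl⟩
    · exact ⟨⟨tauF B hn, rfl⟩, compat_ref B hn⟩
    · have hk' := Finset.mem_filter.mp hkK
      have hkIcc := Finset.mem_Icc.mp hk'.1
      exact ⟨⟨tks B hn k, rfl⟩, compat_k B hn k hkIcc.1 hkIcc.2 hk'.2⟩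
  have hnotmem : edgeAO B (tauF B hn) ∉ (KK B hn).image fun k => edgeAO B (tks B hn k) := by
    intro hmem
    obtain ⟨k, hkK, hke⟩ := Finset.mem_image.mp hmem
    have hk' := Finset.mem_filter.mp hkK
    have hkIcc := Finset.mem_Icc.mp hk'.1
    have h0 : edgeAO B (tauF B hn) (rr B hn 0) = none := (ref_none B hn _).mpr rfl
    rw [← hke] at h0
    have := (tks_none B hn k hkIcc.1 hkIcc.2 _).mp h0
    exact rr_inj B hn 0 k (by omega) hkIcc.2 (by omega) this
  have hinj : Set.InjOn (fun k => edgeAO B (tks B hn k)) ↑(KK B hn) := by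
    intro k hkK k' hkK' hkk
    simp only [Finset.mem_coe] at hkK hkK'
    have hk1 := Finset.mem_Icc.mp (Finset.mem_filter.mp hkK).1
    have hk2 := Finset.mem_Icc.mp (Finset.mem_filter.mp hkK').1
    have h1 : edgeAO B (tks B hn k) (rr B hn k) = none :=
      (tks_none B hn k hk1.1 hk1.2 _).mpr rfl
    have hkk' : edgeAO B (tks B hn k) = edgeAO B (tks B hn k') := hkk
    rw [hkk'] at h1
    have h2 := (tks_none B hn k' hk2.1 hk2.2 _).mp h1
    by_contra hne
    exact rr_inj B hn k k' hk1.2 hk2.2 hne h2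
  have hcard : FF.card = (KK B hn).card + 1 := by
    rw [hFF, Finset.card_insert_of_notMem hnotmem, Finset.card_image_of_injOn hinj]
  unfold degAO
  calc (KK B hn).card + 1 = FF.card := hcard.symm
    _ = (↑FF : Set (Fin n → Option Bool)).ncard := (Set.ncard_coe_finset FF).symm
    _ ≤ _ := Set.ncard_le_ncard hsub (Set.toFinite _)

end AOLB


/-- every assignment-oblivious protocol for `G_n` has cost at least
`log₂(n)/2`: some vertex of the graph `E(Π)` has degree at least `log₂(n)/2`
(hence at least `⌈log₂(n)/2⌉`). -/
theorem assignment_oblivious_lower_bound {n : ℕ} (hn : 1 ≤ n)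
    (B : Fin n → Finset (Fin n) → Bool) :
    ∃ v : Fin n → Bool, Real.logb 2 (n : ℝ) / 2 ≤ (degAO B v : ℝ) := by
  refine ⟨AOLB.vv B hn, ?_⟩
  have hdeg := AOLB.deg_lb B hn
  have hKK := AOLB.KK_card B hn
  have hlog : Real.logb 2 (n : ℝ) ≤ (AOLB.mA n + 2 : ℝ) := by
    have hnat : n < 2 ^ (AOLB.mA n + 2) := by
      have h1 := Nat.lt_pow_succ_log_self (b := 2) (by norm_num) (n + 1)
      have h2 : AOLB.mA n + 2 = Nat.log 2 (n + 1) + 1 := by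
        have := AOLB.mA_succ (n := n) hn
        omega
      rw [h2]
      omega
    have hreal : (n : ℝ) ≤ (2 : ℝ) ^ (AOLB.mA n + 2) := by
      have : (n : ℝ) < ((2 ^ (AOLB.mA n + 2) : ℕ) : ℝ) := by
        exact_mod_cast hnat
      push_cast at this
      linarith
    calc Real.logb 2 (n : ℝ) ≤ Real.logb 2 ((2 : ℝ) ^ (AOLB.mA n + 2)) :=
          Real.logb_le_logb_of_le (by norm_num) (by exact_mod_cast hn) hreal
      _ = (AOLB.mA n + 2 : ℕ) * Real.logb 2 2 := by
          rw [Real.logb_pow]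
      _ = (AOLB.mA n + 2 : ℝ) := by
          rw [Real.logb_self_eq_one (by norm_num)]
          push_cast
          ring
  have hdeg' : ((AOLB.KK B hn).card + 1 : ℝ) ≤ (degAO B (AOLB.vv B hn) : ℝ) := by
    exact_mod_cast hdeg
  have hKK' : (AOLB.mA n : ℝ) ≤ 2 * (AOLB.KK B hn).card := by
    exact_mod_cast hKK
  linarith
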